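/- On ℝ⁴ with coordinates (x, y, y₁, y₂) let ξ₁ = ∂_x + y₁∂_y + y₂∂_{y₁} and ξ₂ = ∂_{y₂} (the Engel distribution on J²(ℝ,ℝ)). Let λ₂ : ℝ⁴ → ℝ be a C² function with ∂_{y₂}λ₂ = 0, and set η = ∂_y + λ₂∂_{y₁} + (ξ₁(λ₂) + λ₂²)∂_{y₂}. Then [ξ₂, η] = (∂_{y₁}λ₂)·ξ₂ and [ξ₁, η] + λ₂·η ∈ span{ξ₂} pointwise; in particular [ξᵢ, η] ∈ span{ξ₁, ξ₂, η} for i = 1, 2, i.e., η is a generalized symmetry of the Engel distribution. -/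

import Mathlib

/-- Lie bracket of vector fields on ℝⁿ. -/
noncomputable def lie {n : ℕ} (X Y : (Fin n → ℝ) → (Fin n → ℝ)) :
    (Fin n → ℝ) → (Fin n → ℝ) :=
  fun p => fderiv ℝ Y p (X p) - fderiv ℝ X p (Y p)

/-- Coordinates (x, y, y₁, y₂) on ℝ⁴ = J²(ℝ,ℝ); the Engel distribution ⟨ξ₁, ξ₂⟩. -/
noncomputable def xi1 : (Fin 4 → ℝ) → (Fin 4 → ℝ) := fun p => ![1, p 2, p 3, 0]

noncomputable def xi2 : (Fin 4 → ℝ) → (Fin 4 → ℝ) := fun _ => ![0, 0, 0, 1]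

/-- The linearization of `xi1`. -/
noncomputable def engelL : (Fin 4 → ℝ) →L[ℝ] (Fin 4 → ℝ) :=
  ContinuousLinearMap.pi ![0, ContinuousLinearMap.proj 2, ContinuousLinearMap.proj 3, 0]

theorem engelL_apply (v : Fin 4 → ℝ) : engelL v = ![0, v 2, v 3, 0] := by
  funext i; fin_cases i <;> simp [engelL]

theorem hasFDerivAt_xi1 (p : Fin 4 → ℝ) : HasFDerivAt xi1 engelL p := by
  apply hasFDerivAt_pi''
  intro i
  fin_cases i <;>
    simp [xi1, engelL, ContinuousLinearMap.proj_pi] <;>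
    first
      | exact hasFDerivAt_const _ _
      | exact hasFDerivAt_apply _ _

theorem engel_generalized_symmetry (l2 : (Fin 4 → ℝ) → ℝ) (hl2 : ContDiff ℝ 2 l2)
    (hy2 : ∀ p, fderiv ℝ l2 p ![0, 0, 0, 1] = 0) :
    (∀ p, lie xi2 (fun q => ![0, 1, l2 q, fderiv ℝ l2 q (xi1 q) + (l2 q) ^ 2]) p
        = (fderiv ℝ l2 p ![0, 0, 1, 0]) • xi2 p) ∧
    (∀ p, lie xi1 (fun q => ![0, 1, l2 q, fderiv ℝ l2 q (xi1 q) + (l2 q) ^ 2]) p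
        + l2 p • (![0, 1, l2 p, fderiv ℝ l2 p (xi1 p) + (l2 p) ^ 2] : Fin 4 → ℝ)
      ∈ Submodule.span ℝ {xi2 p}) ∧
    (∀ p, lie xi1 (fun q => ![0, 1, l2 q, fderiv ℝ l2 q (xi1 q) + (l2 q) ^ 2]) p
        ∈ Submodule.span ℝ
          {xi1 p, xi2 p, (![0, 1, l2 p, fderiv ℝ l2 p (xi1 p) + (l2 p) ^ 2] : Fin 4 → ℝ)} ∧
      lie xi2 (fun q => ![0, 1, l2 q, fderiv ℝ l2 q (xi1 q) + (l2 q) ^ 2]) p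
        ∈ Submodule.span ℝ
          {xi1 p, xi2 p, (![0, 1, l2 p, fderiv ℝ l2 p (xi1 p) + (l2 p) ^ 2] : Fin 4 → ℝ)}) := by
  set η : (Fin 4 → ℝ) → (Fin 4 → ℝ) :=
    fun q => ![0, 1, l2 q, fderiv ℝ l2 q (xi1 q) + (l2 q) ^ 2] with hη
  have hd : Differentiable ℝ l2 := hl2.differentiable (by norm_num)
  have hf' : Differentiable ℝ (fderiv ℝ l2) :=
    (hl2.fderiv_right (m := 1) (by norm_num)).differentiable (by norm_num)
  -- derivative of the 4th component of η
  set G : (Fin 4 → ℝ) → (Fin 4 → ℝ) →L[ℝ] ℝ := fun p =>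
    ((fderiv ℝ l2 p).comp engelL + (fderiv ℝ (fderiv ℝ l2) p).flip (xi1 p)) +
      (l2 p • fderiv ℝ l2 p + l2 p • fderiv ℝ l2 p) with hG
  have hGd : ∀ p, HasFDerivAt (fun q => fderiv ℝ l2 q (xi1 q) + (l2 q) ^ 2) (G p) p := by
    intro p
    have h1 : HasFDerivAt (fun q => fderiv ℝ l2 q (xi1 q))
        ((fderiv ℝ l2 p).comp engelL + (fderiv ℝ (fderiv ℝ l2) p).flip (xi1 p)) p :=
      (hf' p).hasFDerivAt.clm_apply (hasFDerivAt_xi1 p)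
    have h2 : HasFDerivAt (fun q => (l2 q) ^ 2)
        (l2 p • fderiv ℝ l2 p + l2 p • fderiv ℝ l2 p) p := by
      simp only [pow_two]
      exact (hd p).hasFDerivAt.mul (hd p).hasFDerivAt
    exact h1.add h2
  -- derivative of η
  have hηd : ∀ p, HasFDerivAt η
      (ContinuousLinearMap.pi ![0, 0, fderiv ℝ l2 p, G p]) p := by
    intro p
    apply hasFDerivAt_pi''
    intro i
    fin_cases i <;>
      simp only [hη, Matrix.cons_val_zero, Matrix.cons_val_one, Matrix.head_cons,
        Matrix.cons_val_two, Matrix.tail_cons, Matrix.cons_val_three,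
        ContinuousLinearMap.proj_pi] <;>
      first
        | exact hasFDerivAt_const _ _
        | exact (hd p).hasFDerivAt
        | exact hGd p
  have hfderiv_η : ∀ p, fderiv ℝ η p = ContinuousLinearMap.pi ![0, 0, fderiv ℝ l2 p, G p] :=
    fun p => (hηd p).fderiv
  have hfderiv_xi1 : ∀ p, fderiv ℝ xi1 p = engelL := fun p => (hasFDerivAt_xi1 p).fderiv
  have hfderiv_xi2 : ∀ p : Fin 4 → ℝ, fderiv ℝ xi2 p = 0 := fun p => fderiv_const_apply _
  -- the second derivative annihilates e₃ in either slot
  have hzero : ∀ p w, fderiv ℝ (fderiv ℝ l2) p w ![0, 0, 0, 1] = 0 := by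
    intro p w
    have h1 : HasFDerivAt (fun q => fderiv ℝ l2 q (![0, 0, 0, 1] : Fin 4 → ℝ))
        ((fderiv ℝ l2 p).comp (0 : (Fin 4 → ℝ) →L[ℝ] (Fin 4 → ℝ)) +
          (fderiv ℝ (fderiv ℝ l2) p).flip ![0, 0, 0, 1]) p :=
      (hf' p).hasFDerivAt.clm_apply (hasFDerivAt_const _ _)
    have h2 : (fun q => fderiv ℝ l2 q (![0, 0, 0, 1] : Fin 4 → ℝ)) = fun _ => (0 : ℝ) :=
      funext hy2
    rw [h2] at h1
    have h3 := h1.unique (hasFDerivAt_const 0 p)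
    have := congrFun (congrArg DFunLike.coe h3) w
    simpa using this
  have hsymm : ∀ p v w,
      fderiv ℝ (fderiv ℝ l2) p v w = fderiv ℝ (fderiv ℝ l2) p w v := fun p v w =>
    second_derivative_symmetric (fun y => (hd y).hasFDerivAt) (hf' p).hasFDerivAt v w
  have hzero' : ∀ p w, fderiv ℝ (fderiv ℝ l2) p ![0, 0, 0, 1] w = 0 := by
    intro p w; rw [hsymm]; exact hzero p w
  have hpi : ∀ p (v : Fin 4 → ℝ),
      (ContinuousLinearMap.pi ![0, 0, fderiv ℝ l2 p, G p]) v
        = ![0, 0, fderiv ℝ l2 p v, G p v] := by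
    intro p v
    funext i
    fin_cases i <;> rfl
  -- value of G at e₃
  have hGe3 : ∀ p, G p ![0, 0, 0, 1] = fderiv ℝ l2 p ![0, 0, 1, 0] := by
    intro p
    have hL : engelL (![0, 0, 0, 1] : Fin 4 → ℝ) = ![0, 0, 1, 0] := by
      rw [engelL_apply]; norm_num; exact ⟨rfl, rfl⟩
    simp [hG, ContinuousLinearMap.add_apply, ContinuousLinearMap.comp_apply,
      ContinuousLinearMap.flip_apply, ContinuousLinearMap.smul_apply, hL,
      hzero' p (xi1 p), hy2 p]
  -- Part 1
  have part1 : ∀ p, lie xi2 η p = (fderiv ℝ l2 p ![0, 0, 1, 0]) • xi2 p := by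
    intro p
    unfold lie
    rw [hfderiv_xi2 p, hfderiv_η p, show xi2 p = ![0, 0, 0, 1] from rfl, hpi]
    funext i
    fin_cases i <;> simp [xi2, hGe3 p, hy2 p]
  -- Part 2
  have part2 : ∀ p, lie xi1 η p + l2 p • η p
      = (G p (xi1 p) + l2 p * (fderiv ℝ l2 p (xi1 p) + (l2 p) ^ 2)) • xi2 p := by
    intro p
    unfold lie
    rw [hfderiv_xi1 p, hfderiv_η p, hpi, engelL_apply]
    funext i
    fin_cases i <;> simp [xi2, hη] <;> ring
  refine ⟨part1, ?_, ?_⟩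
  · intro p
    rw [show (![0, 1, l2 p, fderiv ℝ l2 p (xi1 p) + (l2 p) ^ 2] : Fin 4 → ℝ) = η p from rfl,
      part2 p]
    exact Submodule.smul_mem _ _ (Submodule.mem_span_singleton_self _)
  · intro p
    have hxi2mem : xi2 p ∈ Submodule.span ℝ
        {xi1 p, xi2 p, (![0, 1, l2 p, fderiv ℝ l2 p (xi1 p) + (l2 p) ^ 2] : Fin 4 → ℝ)} :=
      Submodule.subset_span (by simp)
    have hηmem : (![0, 1, l2 p, fderiv ℝ l2 p (xi1 p) + (l2 p) ^ 2] : Fin 4 → ℝ) ∈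
        Submodule.span ℝ
        {xi1 p, xi2 p, (![0, 1, l2 p, fderiv ℝ l2 p (xi1 p) + (l2 p) ^ 2] : Fin 4 → ℝ)} :=
      Submodule.subset_span (by simp)
    constructor
    · have h := part2 p
      have : lie xi1 η p = (G p (xi1 p) + l2 p * (fderiv ℝ l2 p (xi1 p) + (l2 p) ^ 2)) • xi2 p
          - l2 p • (![0, 1, l2 p, fderiv ℝ l2 p (xi1 p) + (l2 p) ^ 2] : Fin 4 → ℝ) := by
        rw [← h]; abel
      rw [this]
      exact Submodule.sub_mem _ (Submodule.smul_mem _ _ hxi2mem)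
        (Submodule.smul_mem _ _ hηmem)
    · rw [part1 p]
      exact Submodule.smul_mem _ _ hxi2mem
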